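/- Every factor u of the Thue–Morse word of odd length 2m+1 has Parikh vector (m+1, m) or (m, m+1), and every factor of even length 2m+2 has Parikh vector (m+2, m), (m+1, m+1), or (m, m+2). Consequently, the number of sorted Parikh vectors (Parikh vectors up to permutation of coordinates) of length-ℓ factors of the Thue–Morse word is 1 if ℓ is odd and 2 if ℓ is even. -/

import Mathlib

/-- `u` is a factor of the infinite word `w`. -/
def IsFactorI {α : Type*} (u : List α) (w : ℕ → α) : Prop :=
  ∃ j : ℕ, u = (List.range u.length).map (fun i => w (j + i))

/-- The Thue–Morse morphism `0 ↦ 01`, `1 ↦ 10`. -/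
def tmMu : ℕ → List ℕ
  | 0 => [0, 1]
  | _ => [1, 0]

/-- Iterates of the Thue–Morse morphism on the letter `0`. -/
def tmIter : ℕ → List ℕ
  | 0 => [0]
  | k + 1 => (tmIter k).flatMap tmMu

/-- The Thue–Morse word, the fixed point of `0 ↦ 01`, `1 ↦ 10` starting with `0`. -/
def tm (n : ℕ) : ℕ := (tmIter (n + 1)).getD n 0

lemma tmMu_length (x : ℕ) : (tmMu x).length = 2 := by
  cases x <;> rfl

lemma tmIter_length (k : ℕ) : (tmIter k).length = 2 ^ k := by
  induction k with
  | zero => rfl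
  | succ k ih =>
    rw [tmIter, List.length_flatMap]
    rw [show List.map (fun a => (tmMu a).length) (tmIter k) = (tmIter k).map (fun _ => 2) from
      List.map_congr_left (fun a _ => tmMu_length a)]
    rw [List.map_const', List.sum_replicate, smul_eq_mul, ih]
    ring

lemma flatMap_getD (l : List ℕ) (i : ℕ) (hi : i < l.length) (r : ℕ) (hr : r < 2) :
    (l.flatMap tmMu).getD (2 * i + r) 0 = (tmMu (l.getD i 0)).getD r 0 := by
  induction l generalizing i with
  | nil => simp at hi
  | cons a t ih =>
    have hcons : (a :: t).flatMap tmMu = tmMu a ++ t.flatMap tmMu := by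
      simp [List.flatMap]
    cases i with
    | zero =>
      rw [hcons, List.getD_append _ _ _ _ (by rw [tmMu_length]; omega)]
      simp
    | succ i =>
      have := ih i (by simpa using hi)
      rw [hcons, List.getD_append_right _ _ _ _ (by rw [tmMu_length]; omega)]
      rw [tmMu_length, show 2 * (i + 1) + r - 2 = 2 * i + r by omega]
      simpa using this

lemma tmIter_le_one : ∀ k, ∀ x ∈ tmIter k, x ≤ 1 := by
  intro k
  induction k with
  | zero => intro x hx; simp [tmIter] at hx; omega
  | succ k ih =>
    intro x hx
    rw [tmIter, List.mem_flatMap] at hx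
    obtain ⟨a, _, hx⟩ := hx
    cases a <;> simp [tmMu] at hx <;> omega

lemma tmIter_getD_le_one (k n : ℕ) : (tmIter k).getD n 0 ≤ 1 := by
  rcases lt_or_ge n (tmIter k).length with h | h
  · rw [List.getD_eq_getElem _ _ h]
    exact tmIter_le_one k _ (List.getElem_mem h)
  · rw [List.getD_eq_default _ _ h]; omega

lemma tmIter_stable (k n : ℕ) (hn : n < 2 ^ k) :
    (tmIter (k + 1)).getD n 0 = (tmIter k).getD n 0 := by
  induction k generalizing n with
  | zero =>
    interval_cases n
    rfl
  | succ k ih =>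
    have hpow : 2 ^ (k + 1) = 2 * 2 ^ k := by ring
    have hn2 : n % 2 < 2 := Nat.mod_lt _ (by omega)
    have hi : n / 2 < 2 ^ k := by omega
    have hi' : n / 2 < 2 ^ (k + 1) := by omega
    have e : n = 2 * (n / 2) + n % 2 := by omega
    rw [e]
    have hl1 : n / 2 < ((tmIter k).flatMap tmMu).length := by
      rw [show (tmIter k).flatMap tmMu = tmIter (k + 1) from rfl, tmIter_length]; exact hi'
    have hl2 : n / 2 < (tmIter k).length := by rw [tmIter_length]; exact hi
    rw [show tmIter (k + 1 + 1) = ((tmIter k).flatMap tmMu).flatMap tmMu from rfl]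
    rw [show tmIter (k + 1) = (tmIter k).flatMap tmMu from rfl]
    rw [flatMap_getD _ _ hl1 _ hn2, flatMap_getD _ _ hl2 _ hn2]
    rw [show ((tmIter k).flatMap tmMu).getD (n / 2) 0 = (tmIter k).getD (n / 2) 0 from ih _ hi]

lemma tm_eq (m n : ℕ) (hn : n < 2 ^ m) : tm n = (tmIter m).getD n 0 := by
  have key : ∀ j k, n < 2 ^ k → (tmIter (k + j)).getD n 0 = (tmIter k).getD n 0 := by
    intro j
    induction j with
    | zero => intro k _; rfl
    | succ j ih =>
      intro k hk
      have : k + (j + 1) = (k + j) + 1 := by ring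
      rw [this, tmIter_stable _ _ (lt_of_lt_of_le hk (Nat.pow_le_pow_right (by omega) (by omega)))]
      exact ih k hk
  have hn1 : n < 2 ^ (n + 1) := by
    calc n < 2 ^ n := n.lt_two_pow_self
    _ ≤ 2 ^ (n + 1) := Nat.pow_le_pow_right (by omega) (by omega)
  rcases le_total m (n + 1) with h | h
  · have := key (n + 1 - m) m hn
    rw [show m + (n + 1 - m) = n + 1 from by omega] at this
    rw [tm, this]
  · have := key (m - (n + 1)) (n + 1) hn1
    rw [show n + 1 + (m - (n + 1)) = m from by omega] at this
    rw [tm, ← this]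

lemma tm_le_one (n : ℕ) : tm n ≤ 1 := tmIter_getD_le_one _ _

lemma tm_zero : tm 0 = 0 := by rfl

lemma tm_two_mul (n : ℕ) : tm (2 * n) = tm n := by
  have hn : n < 2 ^ n := n.lt_two_pow_self
  have h2n : 2 * n < 2 ^ (n + 1) := by rw [pow_succ]; omega
  rw [tm_eq (n + 1) _ h2n, tm_eq n _ hn]
  rw [show tmIter (n + 1) = (tmIter n).flatMap tmMu from rfl]
  rw [show 2 * n = 2 * n + 0 from rfl]
  rw [flatMap_getD _ _ (by rw [tmIter_length]; exact hn) _ (by omega)]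
  have := tmIter_getD_le_one n n
  interval_cases h : (tmIter n).getD n 0 <;> rfl

lemma tm_two_mul_add_one (n : ℕ) : tm (2 * n + 1) = 1 - tm n := by
  have hn : n < 2 ^ n := n.lt_two_pow_self
  have h2n : 2 * n + 1 < 2 ^ (n + 1) := by rw [pow_succ]; omega
  rw [tm_eq (n + 1) _ h2n, tm_eq n _ hn]
  rw [show tmIter (n + 1) = (tmIter n).flatMap tmMu from rfl]
  rw [flatMap_getD _ _ (by rw [tmIter_length]; exact hn) _ (by omega)]
  have := tmIter_getD_le_one n n
  interval_cases h : (tmIter n).getD n 0 <;> rfl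

/-- Partial sums of tm. -/
def tmS (n : ℕ) : ℕ := ∑ i ∈ Finset.range n, tm i

lemma tmS_even (k : ℕ) : tmS (2 * k) = k := by
  induction k with
  | zero => rfl
  | succ k ih =>
    have h1 : tm (2 * k) = tm k := tm_two_mul k
    have h2 : tm (2 * k + 1) = 1 - tm k := tm_two_mul_add_one k
    have h3 : tm k ≤ 1 := tm_le_one k
    have : 2 * (k + 1) = (2 * k + 1) + 1 := by ring
    rw [this, tmS, Finset.sum_range_succ, Finset.sum_range_succ]
    rw [show ∑ i ∈ Finset.range (2 * k), tm i = tmS (2 * k) from rfl, ih]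
    omega

lemma tmS_odd (k : ℕ) : tmS (2 * k + 1) = k + tm k := by
  rw [tmS, Finset.sum_range_succ, show ∑ i ∈ Finset.range (2 * k), tm i = tmS (2 * k) from rfl,
    tmS_even, tm_two_mul]

lemma tmS_window (j l : ℕ) : tmS (j + l) = tmS j + ∑ i ∈ Finset.range l, tm (j + i) := by
  induction l with
  | zero => simp [tmS]
  | succ l ih =>
    rw [show j + (l + 1) = (j + l) + 1 from rfl, tmS, Finset.sum_range_succ,
      Finset.sum_range_succ, ← tmS, ih]
    omega

lemma count_one_eq_sum (l : List ℕ) (h : ∀ x ∈ l, x ≤ 1) : l.count 1 = l.sum := by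
  induction l with
  | nil => rfl
  | cons a t ih =>
    have ha : a ≤ 1 := h a (by simp)
    have ht := ih (fun x hx => h x (by simp [hx]))
    rw [List.sum_cons, List.count_cons, ht]
    interval_cases a <;> simp <;> omega

lemma count_zero_eq (l : List ℕ) (h : ∀ x ∈ l, x ≤ 1) : l.count 0 = l.length - l.sum := by
  induction l with
  | nil => rfl
  | cons a t ih =>
    have ha : a ≤ 1 := h a (by simp)
    have ht := ih (fun x hx => h x (by simp [hx]))
    have hts : t.sum ≤ t.length := by
      have : ∀ x ∈ t, x ≤ 1 := fun x hx => h x (by simp [hx])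
      calc t.sum = (t.map id).sum := by simp
      _ ≤ (t.map (fun _ => 1)).sum := List.sum_le_sum (by simpa using this)
      _ = t.length := by simp
    rw [List.sum_cons, List.count_cons, ht, List.length_cons]
    interval_cases a <;> simp <;> omega

lemma list_range_sum (f : ℕ → ℕ) (n : ℕ) :
    ((List.range n).map f).sum = ∑ i ∈ Finset.range n, f i := by
  induction n with
  | zero => rfl
  | succ n ih => rw [List.range_succ, Finset.sum_range_succ, List.map_append, List.sum_append, ih]; simp

lemma factor_counts (u : List ℕ) (j : ℕ)
    (hu : u = (List.range u.length).map (fun i => tm (j + i))) :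
    u.count 1 + tmS j = tmS (j + u.length) ∧ u.count 0 + u.count 1 = u.length := by
  have hle : ∀ x ∈ u, x ≤ 1 := by
    intro x hx
    rw [hu] at hx
    simp only [List.mem_map] at hx
    obtain ⟨i, _, rfl⟩ := hx
    exact tm_le_one _
  have hsum : u.sum = ∑ i ∈ Finset.range u.length, tm (j + i) := by
    conv_lhs => rw [hu]
    exact list_range_sum _ _
  have h1 : u.count 1 = u.sum := count_one_eq_sum u hle
  have h0 : u.count 0 = u.length - u.sum := count_zero_eq u hle
  have hw := tmS_window j u.length
  have hsum_le : u.sum ≤ u.length := by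
    calc u.sum = (u.map id).sum := by simp
    _ ≤ (u.map (fun _ => 1)).sum := List.sum_le_sum (by simpa using hle)
    _ = u.length := by simp
  constructor
  · omega
  · omega

/-- tm is non-periodic. -/
lemma tm_nonperiodic : ∀ d, 0 < d → ∃ a, tm (a + d) ≠ tm a := by
  intro d
  induction d using Nat.strong_induction_on with
  | _ d ih =>
    intro hd
    rcases Nat.even_or_odd d with ⟨e, he⟩ | ⟨q, hq⟩
    · -- d = 2e
      have he' : d = 2 * e := by omega
      have hepos : 0 < e := by omega
      obtain ⟨a, ha⟩ := ih e (by omega) hepos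
      refine ⟨2 * a, ?_⟩
      rw [he', show 2 * a + 2 * e = 2 * (a + e) from by ring, tm_two_mul, tm_two_mul]
      exact ha
    · -- d = 2q + 1
      by_contra h
      push_neg at h
      have key : ∀ n, tm n = 1 - tm (n + q) := by
        intro n
        have := h (2 * n)
        rw [hq, show 2 * n + (2 * q + 1) = 2 * (n + q) + 1 from by ring,
          tm_two_mul_add_one, tm_two_mul] at this
        have t1 := tm_le_one n
        have t2 := tm_le_one (n + q)
        omega
      have key2 : ∀ n, tm (n + q + 1) = 1 - tm n := by
        intro n
        have := h (2 * n + 1)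
        rw [hq, show 2 * n + 1 + (2 * q + 1) = 2 * (n + q + 1) from by ring,
          tm_two_mul, tm_two_mul_add_one] at this
        have t1 := tm_le_one n
        omega
      have const : ∀ n, tm (n + q + 1) = tm (n + q) := by
        intro n
        have k1 := key n
        have k2 := key2 n
        have t1 := tm_le_one (n + q)
        have t2 := tm_le_one n
        omega
      -- contradiction at n = q : tm (2q+1) = tm (2q)
      have hc := const q
      rw [show q + q + 1 = 2 * q + 1 from by ring, show q + q = 2 * q from by ring,
        tm_two_mul, tm_two_mul_add_one] at hc
      have := tm_le_one q
      omega

lemma part_odd (m : ℕ) (u : List ℕ) (hf : IsFactorI u tm) (hl : u.length = 2 * m + 1) :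
    (u.count 0, u.count 1) = (m + 1, m) ∨ (u.count 0, u.count 1) = (m, m + 1) := by
  obtain ⟨j, hu⟩ := hf
  obtain ⟨h1, h0⟩ := factor_counts u j hu
  rw [hl] at h1 h0
  rcases Nat.even_or_odd j with ⟨a, ha⟩ | ⟨a, ha⟩
  · have hja : j = 2 * a := by omega
    have e1 : tmS j = a := by rw [hja, tmS_even]
    have e2 : tmS (j + (2 * m + 1)) = (a + m) + tm (a + m) := by
      rw [hja, show 2 * a + (2 * m + 1) = 2 * (a + m) + 1 from by ring, tmS_odd]
    have := tm_le_one (a + m)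
    have hc : (u.count 0 = m + 1 ∧ u.count 1 = m) ∨ (u.count 0 = m ∧ u.count 1 = m + 1) := by
      omega
    rcases hc with ⟨hx, hy⟩ | ⟨hx, hy⟩
    · left; rw [hx, hy]
    · right; rw [hx, hy]
  · have e1 : tmS j = a + tm a := by rw [ha, tmS_odd]
    have e2 : tmS (j + (2 * m + 1)) = a + m + 1 := by
      rw [ha, show 2 * a + 1 + (2 * m + 1) = 2 * (a + m + 1) from by ring, tmS_even]
    have := tm_le_one a
    have hc : (u.count 0 = m + 1 ∧ u.count 1 = m) ∨ (u.count 0 = m ∧ u.count 1 = m + 1) := by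
      omega
    rcases hc with ⟨hx, hy⟩ | ⟨hx, hy⟩
    · left; rw [hx, hy]
    · right; rw [hx, hy]

lemma part_even (m : ℕ) (u : List ℕ) (hf : IsFactorI u tm) (hl : u.length = 2 * m + 2) :
    (u.count 0, u.count 1) = (m + 2, m) ∨ (u.count 0, u.count 1) = (m + 1, m + 1) ∨
      (u.count 0, u.count 1) = (m, m + 2) := by
  obtain ⟨j, hu⟩ := hf
  obtain ⟨h1, h0⟩ := factor_counts u j hu
  rw [hl] at h1 h0
  rcases Nat.even_or_odd j with ⟨a, ha⟩ | ⟨a, ha⟩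
  · have hja : j = 2 * a := by omega
    have e1 : tmS j = a := by rw [hja, tmS_even]
    have e2 : tmS (j + (2 * m + 2)) = a + m + 1 := by
      rw [hja, show 2 * a + (2 * m + 2) = 2 * (a + m + 1) from by ring, tmS_even]
    have hc : u.count 0 = m + 1 ∧ u.count 1 = m + 1 := by omega
    right; left; rw [hc.1, hc.2]
  · have e1 : tmS j = a + tm a := by rw [ha, tmS_odd]
    have e2 : tmS (j + (2 * m + 2)) = (a + m + 1) + tm (a + m + 1) := by
      rw [ha, show 2 * a + 1 + (2 * m + 2) = 2 * (a + m + 1) + 1 from by ring, tmS_odd]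
    have t1 := tm_le_one a
    have t2 := tm_le_one (a + m + 1)
    have hc : (u.count 0 = m + 2 ∧ u.count 1 = m) ∨ (u.count 0 = m + 1 ∧ u.count 1 = m + 1)
        ∨ (u.count 0 = m ∧ u.count 1 = m + 2) := by omega
    rcases hc with ⟨hx, hy⟩ | ⟨hx, hy⟩ | ⟨hx, hy⟩
    · left; rw [hx, hy]
    · right; left; rw [hx, hy]
    · right; right; rw [hx, hy]

lemma exists_factor (j l : ℕ) :
    ∃ u : List ℕ, IsFactorI u tm ∧ u.length = l ∧
      u = (List.range l).map (fun i => tm (j + i)) := by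
  refine ⟨(List.range l).map (fun i => tm (j + i)), ?_, by simp, rfl⟩
  refine ⟨j, ?_⟩
  congr 1
  simp

lemma part_three (ℓ : ℕ) (hl : 0 < ℓ) :
    Nat.card {p : ℕ × ℕ // ∃ u : List ℕ, IsFactorI u tm ∧ u.length = ℓ ∧
        p = (max (u.count 0) (u.count 1), min (u.count 0) (u.count 1))} =
      if Odd ℓ then 1 else 2 := by
  have hcoe : Nat.card {p : ℕ × ℕ // ∃ u : List ℕ, IsFactorI u tm ∧ u.length = ℓ ∧
        p = (max (u.count 0) (u.count 1), min (u.count 0) (u.count 1))} =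
      Set.ncard {p : ℕ × ℕ | ∃ u : List ℕ, IsFactorI u tm ∧ u.length = ℓ ∧
        p = (max (u.count 0) (u.count 1), min (u.count 0) (u.count 1))} :=
    Nat.card_coe_set_eq _
  rw [hcoe]
  rcases Nat.even_or_odd ℓ with ⟨m', hm'⟩ | ⟨m, hm⟩
  · -- even, ℓ = 2m+2
    obtain ⟨m, hm⟩ : ∃ m, ℓ = 2 * m + 2 := ⟨m' - 1, by omega⟩
    rw [if_neg (by rw [hm]; simp [Nat.odd_iff, Nat.add_mul_mod_self_left])]
    have hset : {p : ℕ × ℕ | ∃ u : List ℕ, IsFactorI u tm ∧ u.length = ℓ ∧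
        p = (max (u.count 0) (u.count 1), min (u.count 0) (u.count 1))} =
        {(m + 2, m), (m + 1, m + 1)} := by
      ext p
      simp only [Set.mem_setOf_eq, Set.mem_insert_iff, Set.mem_singleton_iff]
      constructor
      · rintro ⟨u, hf, hlen, rfl⟩
        rcases part_even m u hf (by omega) with h | h | h <;>
          simp only [Prod.mk.injEq] at h ⊢ <;> omega
      · rintro (rfl | rfl)
        · -- witness with counts {m+2, m}
          obtain ⟨a, hne⟩ := tm_nonperiodic (m + 1) (by omega)
          obtain ⟨u, hf, hlen, hu⟩ := exists_factor (2 * a + 1) ℓ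
          obtain ⟨h1, h0⟩ := factor_counts u (2 * a + 1) (by rw [hlen]; exact hu)
          rw [hlen, hm] at h1 h0
          rw [show a + (m + 1) = a + m + 1 from by ring] at hne
          have e1 : tmS (2 * a + 1) = a + tm a := tmS_odd a
          have e2 : tmS (2 * a + 1 + (2 * m + 2)) = (a + m + 1) + tm (a + m + 1) := by
            rw [show 2 * a + 1 + (2 * m + 2) = 2 * (a + m + 1) + 1 from by ring, tmS_odd]
          have t1 := tm_le_one a
          have t2 := tm_le_one (a + m + 1)
          refine ⟨u, hf, hlen, ?_⟩
          simp only [Prod.mk.injEq]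
          constructor <;> omega
        · -- witness at j = 0
          obtain ⟨u, hf, hlen, hu⟩ := exists_factor 0 ℓ
          obtain ⟨h1, h0⟩ := factor_counts u 0 (by rw [hlen]; exact hu)
          rw [hlen, hm] at h1 h0
          have e1 : tmS 0 = 0 := rfl
          have e2 : tmS (0 + (2 * m + 2)) = m + 1 := by
            rw [show 0 + (2 * m + 2) = 2 * (m + 1) from by ring, tmS_even]
          refine ⟨u, hf, hlen, ?_⟩
          simp only [Prod.mk.injEq]
          constructor <;> omega
    rw [hset]
    exact Set.ncard_pair (by simp only [ne_eq, Prod.mk.injEq]; omega)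
  · -- odd, ℓ = 2m+1
    rw [if_pos ⟨m, by omega⟩]
    have hset : {p : ℕ × ℕ | ∃ u : List ℕ, IsFactorI u tm ∧ u.length = ℓ ∧
        p = (max (u.count 0) (u.count 1), min (u.count 0) (u.count 1))} =
        {(m + 1, m)} := by
      ext p
      simp only [Set.mem_setOf_eq, Set.mem_singleton_iff]
      constructor
      · rintro ⟨u, hf, hlen, rfl⟩
        rcases part_odd m u hf (by omega) with h | h <;>
          simp only [Prod.mk.injEq] at h ⊢ <;> omega
      · rintro rfl
        obtain ⟨u, hf, hlen, hu⟩ := exists_factor 0 ℓ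
        refine ⟨u, hf, hlen, ?_⟩
        rcases part_odd m u hf (by omega) with h | h <;>
          simp only [Prod.mk.injEq] at h ⊢ <;> omega
    rw [hset, Set.ncard_singleton]

theorem tm_parikh_and_sorted_abelian_complexity :
    -- odd-length factors
    (∀ m : ℕ, ∀ u : List ℕ, IsFactorI u tm → u.length = 2 * m + 1 →
      (u.count 0, u.count 1) = (m + 1, m) ∨ (u.count 0, u.count 1) = (m, m + 1)) ∧
    -- even-length factors
    (∀ m : ℕ, ∀ u : List ℕ, IsFactorI u tm → u.length = 2 * m + 2 →
      (u.count 0, u.count 1) = (m + 2, m) ∨ (u.count 0, u.count 1) = (m + 1, m + 1) ∨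
        (u.count 0, u.count 1) = (m, m + 2)) ∧
    -- number of sorted Parikh vectors of length-ℓ factors
    (∀ ℓ : ℕ, 0 < ℓ →
      Nat.card {p : ℕ × ℕ // ∃ u : List ℕ, IsFactorI u tm ∧ u.length = ℓ ∧
        p = (max (u.count 0) (u.count 1), min (u.count 0) (u.count 1))} =
      if Odd ℓ then 1 else 2) := by
  exact ⟨part_odd, part_even, part_three⟩
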